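/- arXiv:2109.12896 — 3 statements merged into one kernel-verified Lean document; each statement's English description precedes it below -/
import Mathlib

section
/- Let X be a normal random variable with mean (r − σ²/2)t and variance σ²t, where σ > 0, r ≥ 0, t > 0. Let H > S₀ > 0 and suppose ε ∈ (0, 1/2) satisfies log(1/(2ε)) > (4/5)(1 + 2r/σ²) log(H/S₀) and t < 8(log(H/S₀))²/(25σ² log(1/(2ε))). Then E[e^X · 1{e^X ≥ H/S₀}] < ε·e^{rt}. -/
open MeasureTheory ProbabilityTheory Real
open scoped ENNReal NNReal

private lemma gauss_shift (b c : ℝ) :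
    ∫ x in Set.Ioi b, Real.exp (-c * (x - b)^2) = ∫ x in Set.Ioi (0:ℝ), Real.exp (-c * x^2) := by
  have h := (measurePreserving_add_right (volume : Measure ℝ) b).setIntegral_preimage_emb
    (measurableEmbedding_addRight b) (fun y => Real.exp (-c * (y - b)^2)) (Set.Ioi b)
  have hpre : (· + b) ⁻¹' Set.Ioi b = Set.Ioi (0:ℝ) := by ext x; simp
  rw [hpre] at h
  rw [← h]
  congr 1 with x
  ring_nf

private lemma gauss_tail (m b V : ℝ) (hV : 0 < V) (hmb : m ≤ b) :
    ∫ x in Set.Ici b, gaussianPDFReal m (Real.toNNReal V) x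
      ≤ Real.exp (-(b - m)^2 / (2*V)) / 2 := by
  have hVcoe : ((Real.toNNReal V : ℝ≥0) : ℝ) = V := Real.coe_toNNReal _ hV.le
  have h2V : (0:ℝ) < 2*V := by linarith
  have hc : (0:ℝ) < 1/(2*V) := by positivity
  have hA : (0:ℝ) < Real.sqrt (2 * π * V) := Real.sqrt_pos.2 (by positivity)
  have hbound : ∀ x ∈ Set.Ici b, gaussianPDFReal m (Real.toNNReal V) x
      ≤ (Real.sqrt (2 * π * V))⁻¹
        * (Real.exp (-(b - m)^2 / (2*V)) * Real.exp (-(1/(2*V)) * (x - b)^2)) := by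
    intro x hx
    have hx' : b ≤ x := hx
    simp only [gaussianPDFReal, hVcoe]
    refine mul_le_mul_of_nonneg_left ?_ (by positivity)
    rw [← Real.exp_add]
    refine Real.exp_le_exp.2 ?_
    have key : (b - m)^2 + (x - b)^2 ≤ (x - m)^2 := by
      nlinarith [mul_nonneg (sub_nonneg.2 hx') (sub_nonneg.2 hmb)]
    rw [show -(b - m) ^ 2 / (2 * V) + -(1 / (2 * V)) * (x - b) ^ 2
        = (-(b-m)^2 - (x-b)^2) / (2*V) by field_simp; ring]
    rw [div_le_div_iff_of_pos_right h2V]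
    linarith
  have hint : Integrable (fun x : ℝ => (Real.sqrt (2 * π * V))⁻¹
      * (Real.exp (-(b - m)^2 / (2*V)) * Real.exp (-(1/(2*V)) * (x - b)^2))) := by
    refine Integrable.const_mul ?_ _
    exact (Integrable.const_mul ((integrable_exp_neg_mul_sq hc).comp_sub_right b) _)
  have hle := setIntegral_mono_on
    ((integrable_gaussianPDFReal m (Real.toNNReal V)).integrableOn)
    hint.integrableOn measurableSet_Ici hbound
  refine hle.trans ?_
  rw [integral_const_mul, integral_const_mul, MeasureTheory.integral_Ici_eq_integral_Ioi,
    gauss_shift, integral_gaussian_Ioi]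
  rw [show π / (1/(2*V)) = 2 * π * V by field_simp]
  rw [show (Real.sqrt (2 * π * V))⁻¹
        * (Real.exp (-(b - m)^2 / (2*V)) * (Real.sqrt (2 * π * V) / 2))
      = Real.exp (-(b - m)^2 / (2*V)) / 2
        * ((Real.sqrt (2 * π * V))⁻¹ * Real.sqrt (2 * π * V)) by ring]
  rw [inv_mul_cancel₀ hA.ne']
  simp

private lemma pdf_tilt (μ V : ℝ) (hV : 0 < V) (x : ℝ) :
    gaussianPDFReal μ (Real.toNNReal V) x * Real.exp x
      = Real.exp (μ + V/2) * gaussianPDFReal (μ + V) (Real.toNNReal V) x := by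
  have hVcoe : ((Real.toNNReal V : ℝ≥0) : ℝ) = V := Real.coe_toNNReal _ hV.le
  have hVne : V ≠ 0 := hV.ne'
  simp only [gaussianPDFReal, hVcoe]
  have hexp : -(x - μ)^2/(2*V) + x = (μ + V/2) + -(x - (μ + V))^2/(2*V) := by
    field_simp
    ring
  rw [mul_assoc ((Real.sqrt (2 * π * V))⁻¹), ← Real.exp_add, hexp, Real.exp_add, ← mul_assoc]
  ring

private lemma lognormal_alg (r σ t b L V : ℝ) (hσ : 0 < σ) (ht : 0 < t) (hb : 0 < b)
    (hL : 0 < L) (hV : V = σ^2 * t)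
    (h1 : 4*(σ^2+2*r)*b < 5*σ^2*L) (h2 : 25*L*V < 8*b^2) :
    0 < b - ((r - σ^2/2)*t + V) ∧ 2*L*V < (b - ((r - σ^2/2)*t + V))^2 := by
  set m := (r - σ^2/2)*t + V with hm
  have hVpos : 0 < V := by rw [hV]; positivity
  have hLV : 0 < L*V := mul_pos hL hVpos
  have h8 : 8*b*m < 5*L*V := by
    have := mul_lt_mul_of_pos_right h1 ht
    have hmV : 8*b*m = 4*(σ^2+2*r)*b*t := by rw [hm, hV]; ring
    nlinarith
  have hc : 0 < b - m := by nlinarith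
  have c8 : 8*b^2 - 5*L*V < 8*b*(b-m) := by nlinarith
  have p1 : 0 < 8*b^2 - 25*L*V := by linarith
  have pos5 : 0 ≤ 8*b^2 - 5*L*V := by nlinarith
  have sq_ineq : (8*b^2 - 5*L*V)^2 < (8*b*(b-m))^2 := by
    have := mul_self_lt_mul_self pos5 c8
    nlinarith [this]
  have p2 : 0 < 8*b^2 - L*V := by nlinarith
  refine ⟨hc, ?_⟩
  have h64 : 64*b^2*(2*L*V) < 64*b^2*((b-m)^2) := by nlinarith [mul_pos p1 p2]
  exact lt_of_mul_lt_mul_left h64 (by positivity)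

/-- Upper-tail first-moment bound for the lognormal: if `X ~ N((r - σ²/2)t, σ²t)`,
`H > S₀ > 0`, `ε ∈ (0, 1/2)` satisfies `log(1/(2ε)) > (4/5)(1 + 2r/σ²) log(H/S₀)` and
`t < 8(log(H/S₀))²/(25σ² log(1/(2ε)))`, then `E[e^X · 1{e^X ≥ H/S₀}] < ε e^{rt}`. -/
theorem lognormal_upper_tail_moment (r σ t S₀ H ε : ℝ)
    (hσ : 0 < σ) (hr : 0 ≤ r) (ht : 0 < t) (hS₀ : 0 < S₀) (hH : S₀ < H)
    (hε : ε ∈ Set.Ioo (0 : ℝ) (1 / 2))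
    (hεcond : Real.log (1 / (2 * ε)) > (4 / 5) * (1 + 2 * r / σ ^ 2) * Real.log (H / S₀))
    (htcond : t < 8 * (Real.log (H / S₀)) ^ 2 / (25 * σ ^ 2 * Real.log (1 / (2 * ε)))) :
    ∫ x in {x : ℝ | H / S₀ ≤ Real.exp x}, Real.exp x
        ∂(gaussianReal ((r - σ ^ 2 / 2) * t) (Real.toNNReal (σ ^ 2 * t)))
      < ε * Real.exp (r * t) := by
  obtain ⟨hε0, hε2⟩ := hε
  have hb : 0 < Real.log (H / S₀) := Real.log_pos ((one_lt_div hS₀).2 hH)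
  have hL : 0 < Real.log (1 / (2 * ε)) :=
    Real.log_pos (by rw [lt_div_iff₀ (by linarith)]; linarith)
  have hVpos : (0:ℝ) < σ^2 * t := by positivity
  have hσ2 : (0:ℝ) < σ^2 := by positivity
  have h1 : 4*(σ^2+2*r)*(Real.log (H / S₀)) < 5*σ^2*(Real.log (1 / (2 * ε))) := by
    have e : 4/5*(1+2*r/σ^2)*(Real.log (H / S₀))
        = (4*(σ^2+2*r)*(Real.log (H / S₀)))/(5*σ^2) := by field_simp
    rw [gt_iff_lt, e, div_lt_iff₀ (by positivity)] at hεcond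
    linarith
  have h2 : 25*(Real.log (1 / (2 * ε)))*(σ^2*t) < 8*(Real.log (H / S₀))^2 := by
    rw [lt_div_iff₀ (by positivity)] at htcond
    nlinarith
  obtain ⟨hc, hkey⟩ := lognormal_alg r σ t (Real.log (H / S₀)) (Real.log (1 / (2 * ε)))
    (σ^2*t) hσ ht hb hL rfl h1 h2
  set b := Real.log (H / S₀)
  set L := Real.log (1 / (2 * ε))
  set V : ℝ := σ^2 * t
  set m : ℝ := (r - σ^2/2)*t + V with hm
  have hset : {x : ℝ | H / S₀ ≤ Real.exp x} = Set.Ici b := by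
    ext x
    simp only [Set.mem_setOf_eq, Set.mem_Ici]
    exact (Real.log_le_iff_le_exp (div_pos (lt_trans hS₀ hH) hS₀)).symm
  rw [hset]
  have hvne : (Real.toNNReal V) ≠ 0 := by
    simp [Real.toNNReal_eq_zero, not_le, hVpos]
  rw [gaussianReal_of_var_ne_zero _ hvne]
  have hwd : (volume : Measure ℝ).withDensity (gaussianPDF ((r - σ ^ 2 / 2) * t) (Real.toNNReal V))
      = (volume : Measure ℝ).withDensity
        (fun x => (((gaussianPDFReal ((r - σ ^ 2 / 2) * t) (Real.toNNReal V) x).toNNReal : ℝ≥0)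
          : ℝ≥0∞)) := rfl
  rw [hwd, setIntegral_withDensity_eq_setIntegral_smul
    ((measurable_gaussianPDFReal _ _).real_toNNReal) _ measurableSet_Ici]
  have hrt : (r - σ ^ 2 / 2) * t + V/2 = r * t := by simp only [V]; ring
  have hsm : ∀ x ∈ Set.Ici b,
      ((gaussianPDFReal ((r - σ ^ 2 / 2) * t) (Real.toNNReal V) x).toNNReal : ℝ≥0) • Real.exp x
        = Real.exp (r*t) * gaussianPDFReal m (Real.toNNReal V) x := by
    intro x _
    rw [NNReal.smul_def, Real.coe_toNNReal _ (gaussianPDFReal_nonneg _ _ _), smul_eq_mul]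
    rw [pdf_tilt _ _ hVpos, hrt, hm]
  rw [setIntegral_congr_fun measurableSet_Ici hsm, integral_const_mul]
  have htail := gauss_tail m b V hVpos (by linarith)
  have hhalf : Real.exp (-(b - m)^2 / (2*V)) / 2 < ε := by
    have hDL : Real.exp (-(b - m)^2 / (2*V)) < Real.exp (-L) := by
      refine Real.exp_lt_exp.2 ?_
      rw [neg_div, neg_lt_neg_iff, lt_div_iff₀ (by linarith : (0:ℝ) < 2*V)]
      linarith
    have hexpL : Real.exp (-L) = 2 * ε := by
      rw [show -L = Real.log (2*ε) by rw [show L = Real.log (1/(2*ε)) from rfl, one_div,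
        Real.log_inv, neg_neg]]
      exact Real.exp_log (by linarith)
    linarith [hDL, hexpL ▸ hDL]
  calc Real.exp (r*t) * ∫ x in Set.Ici b, gaussianPDFReal m (Real.toNNReal V) x
      ≤ Real.exp (r*t) * (Real.exp (-(b - m)^2 / (2*V)) / 2) := by
        exact mul_le_mul_of_nonneg_left htail (Real.exp_pos _).le
    _ < Real.exp (r*t) * ε := by
        exact mul_lt_mul_of_pos_left hhalf (Real.exp_pos _)
    _ = ε * Real.exp (r*t) := mul_comm _ _
end

section
/- Let X be a normal random variable with mean (r − σ²/2)t and variance σ²t, where σ > 0, r ≥ 0, t > 0. Let H > S₀ > 0 and suppose ε ∈ (0, 1/2) satisfies log(1/(2ε)) > (4/5)(1 + 2r/σ²) log(H/S₀) and t < 8(log(H/S₀))²/(25σ² log(1/(2ε))). Then P(X ≥ log(H/S₀)) < ε. -/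
open MeasureTheory ProbabilityTheory
open Real
open scoped NNReal ENNReal

lemma gauss_half (c : ℝ) (v : ℝ≥0) (hv : v ≠ 0) :
    ∫ x in Set.Ici c, gaussianPDFReal c v x = 1 / 2 := by
  have hv0 : (0 : ℝ) < v := by positivity
  rw [MeasureTheory.integral_Ici_eq_integral_Ioi]
  simp only [gaussianPDFReal]
  have h1 : ∫ x in Set.Ioi c, (√(2 * π * v))⁻¹ * rexp (-(x - c) ^ 2 / (2 * v))
      = ∫ x in Set.Ioi (0:ℝ), (√(2 * π * v))⁻¹ * rexp (-x ^ 2 / (2 * v)) := by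
    rw [← integral_indicator measurableSet_Ioi, ← integral_indicator measurableSet_Ioi,
      ← integral_sub_right_eq_self
        (fun x => Set.indicator (Set.Ioi (0:ℝ))
          (fun y => (√(2 * π * (v:ℝ)))⁻¹ * rexp (-y ^ 2 / (2 * (v:ℝ)))) x) c]
    congr 1
    ext x
    simp [Set.indicator_apply, Set.mem_Ioi, sub_pos]
  rw [h1, integral_const_mul]
  have h2 : ∀ x : ℝ, -x ^ 2 / (2 * (v:ℝ)) = -(2 * (v:ℝ))⁻¹ * x ^ 2 := by
    intro x; field_simp
  simp_rw [h2]
  rw [integral_gaussian_Ioi]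
  have h3 : π / (2 * (v:ℝ))⁻¹ = 2 * π * v := by field_simp
  rw [h3]
  have h4 : (0:ℝ) < √(2 * π * v) := Real.sqrt_pos.mpr (by positivity)
  field_simp

lemma gauss_tail_le (μ : ℝ) (v : ℝ≥0) (hv : v ≠ 0) (c : ℝ) (hc : μ ≤ c) :
    ((gaussianReal μ v) (Set.Ici c)).toReal ≤ rexp (-(c - μ) ^ 2 / (2 * v)) / 2 := by
  have hv0 : (0 : ℝ) < v := by positivity
  rw [gaussianReal_apply_eq_integral _ hv,
    ENNReal.toReal_ofReal (setIntegral_nonneg measurableSet_Ici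
      (fun x _ => gaussianPDFReal_nonneg _ _ _))]
  have key : ∫ x in Set.Ici c, gaussianPDFReal μ v x
      ≤ ∫ x in Set.Ici c, rexp (-(c - μ) ^ 2 / (2 * v)) * gaussianPDFReal c v x := by
    refine setIntegral_mono_on ((integrable_gaussianPDFReal _ _).restrict)
      (((integrable_gaussianPDFReal _ _).restrict).const_mul _) measurableSet_Ici ?_
    intro x hx
    simp only [Set.mem_Ici] at hx
    simp only [gaussianPDFReal]
    rw [mul_left_comm, ← Real.exp_add]
    gcongr
    rw [← add_div, div_le_div_iff_of_pos_right (by positivity)]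
    nlinarith [mul_nonneg (sub_nonneg.mpr hx) (sub_nonneg.mpr hc)]
  calc ∫ x in Set.Ici c, gaussianPDFReal μ v x
      ≤ ∫ x in Set.Ici c, rexp (-(c - μ) ^ 2 / (2 * v)) * gaussianPDFReal c v x := key
    _ = rexp (-(c - μ) ^ 2 / (2 * v)) * (1 / 2) := by
        rw [integral_const_mul, gauss_half c v hv]
    _ = rexp (-(c - μ) ^ 2 / (2 * v)) / 2 := by ring

/-- Upper-tail probability bound for the log-return: if `X ~ N((r - σ²/2)t, σ²t)`,
`H > S₀ > 0`, `ε ∈ (0, 1/2)` satisfies `log(1/(2ε)) > (4/5)(1 + 2r/σ²) log(H/S₀)` and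
`t < 8(log(H/S₀))²/(25σ² log(1/(2ε)))`, then `P(X ≥ log(H/S₀)) < ε`. -/
theorem lognormal_upper_tail_prob (r σ t S₀ H ε : ℝ)
    (hσ : 0 < σ) (hr : 0 ≤ r) (ht : 0 < t) (hS₀ : 0 < S₀) (hH : S₀ < H)
    (hε : ε ∈ Set.Ioo (0 : ℝ) (1 / 2))
    (hεcond : Real.log (1 / (2 * ε)) > (4 / 5) * (1 + 2 * r / σ ^ 2) * Real.log (H / S₀))
    (htcond : t < 8 * (Real.log (H / S₀)) ^ 2 / (25 * σ ^ 2 * Real.log (1 / (2 * ε)))) :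
    ((gaussianReal ((r - σ ^ 2 / 2) * t) (Real.toNNReal (σ ^ 2 * t)))
        (Set.Ici (Real.log (H / S₀)))).toReal < ε := by
  obtain ⟨hε0, hε2⟩ := hε
  set L := Real.log (H / S₀) with hL_def
  set A := Real.log (1 / (2 * ε)) with hA_def
  have hL : 0 < L := Real.log_pos ((one_lt_div hS₀).mpr hH)
  have hA : 0 < A := Real.log_pos (by rw [lt_div_iff₀ (by positivity)]; linarith)
  have hs : 0 < σ ^ 2 := by positivity
  have hvt : 0 < σ ^ 2 * t := by positivity
  have hv : (σ ^ 2 * t).toNNReal ≠ 0 := by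
    rw [ne_eq, Real.toNNReal_eq_zero]; exact not_le.mpr hvt
  have hvcoe : (((σ ^ 2 * t).toNNReal : ℝ≥0) : ℝ) = σ ^ 2 * t := Real.coe_toNNReal _ hvt.le
  have htA : 25 * σ ^ 2 * A * t < 8 * L ^ 2 := by
    rw [lt_div_iff₀ (by positivity)] at htcond
    nlinarith [htcond]
  have h8 : 8 * r * L < 5 * (σ ^ 2 * A) := by
    have key : 4 / 5 * (1 + 2 * r / σ ^ 2) * L * σ ^ 2 = 4 / 5 * (σ ^ 2 + 2 * r) * L := by
      field_simp
    have h := mul_lt_mul_of_pos_right hεcond hs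
    rw [key] at h
    nlinarith [mul_pos hs hL]
  have hrt : r * t ≤ L / 5 := by
    nlinarith [mul_lt_mul_of_pos_right h8 ht, htA, hL, mul_pos hL hL]
  set μ := (r - σ ^ 2 / 2) * t with hμ_def
  have hμL : μ ≤ L / 5 := by nlinarith [hvt]
  have hcμ : μ ≤ L := by nlinarith
  refine lt_of_le_of_lt (gauss_tail_le μ _ hv L hcμ) ?_
  rw [hvcoe]
  have hexp : rexp (-A) = 2 * ε := by
    rw [hA_def, one_div, Real.log_inv, neg_neg, Real.exp_log (by positivity)]
  have hkey : A * (2 * (σ ^ 2 * t)) < (L - μ) ^ 2 := by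
    nlinarith [htA, hμL, hL, sq_nonneg (L - μ - 4 / 5 * L)]
  have hlt : rexp (-(L - μ) ^ 2 / (2 * (σ ^ 2 * t))) < rexp (-A) := by
    apply Real.exp_lt_exp.mpr
    rw [neg_div]
    exact neg_lt_neg ((lt_div_iff₀ (by positivity)).mpr hkey)
  calc rexp (-(L - μ) ^ 2 / (2 * (σ ^ 2 * t))) / 2 < rexp (-A) / 2 := by linarith
    _ = ε := by rw [hexp]; ring
end

section
/- Let X be a normal random variable with mean (r − σ²/2)t and variance σ²t, where σ > 0, r ≥ 0, t > 0. Let 0 < L < S₀ and suppose ε ∈ (0, 1/2) satisfies log(1/(2ε)) > (4/5)(1 − 2r/σ²) log(S₀/L) and t < 8(log(S₀/L))²/(25σ² log(1/(2ε))). Then P(X ≤ log(L/S₀)) < ε and E[e^X · 1{e^X ≤ L/S₀}] < ε·e^{rt}. -/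
open MeasureTheory ProbabilityTheory

open scoped NNReal ENNReal

lemma my_gaussianReal_Iic_self (m : ℝ) (v : ℝ≥0) (hv : v ≠ 0) :
    gaussianReal m v (Set.Iic m) = 1 / 2 := by
  have hmap : (gaussianReal 0 v).map (· + m) = gaussianReal m v := by
    simpa using gaussianReal_map_add_const (μ := 0) (v := v) m
  have h1 : gaussianReal m v (Set.Iic m) = gaussianReal 0 v (Set.Iic 0) := by
    rw [← hmap, Measure.map_apply (measurable_id'.add_const m) measurableSet_Iic]
    congr 1
    ext x
    simp
  have hone : (⟨(-1 : ℝ) ^ 2, sq_nonneg _⟩ : ℝ≥0) = 1 := by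
    ext; norm_num
  have hneg : (gaussianReal 0 v).map (fun x => (-1 : ℝ) * x) = gaussianReal 0 v := by
    have h := gaussianReal_map_const_mul (μ := 0) (v := v) (-1)
    rw [mul_zero] at h
    convert h using 2
    ext; simp
  have h2 : gaussianReal 0 v (Set.Ici 0) = gaussianReal 0 v (Set.Iic 0) := by
    conv_lhs => rw [← hneg]
    rw [Measure.map_apply (measurable_id'.const_mul _) measurableSet_Ici]
    congr 1
    ext x
    simp
  have h0 : gaussianReal 0 v ({0} : Set ℝ) = 0 :=
    gaussianReal_absolutelyContinuous 0 hv (Real.volume_singleton)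
  have h3 : gaussianReal 0 v (Set.Ioi 0) = gaussianReal 0 v (Set.Iic 0) := by
    rw [← h2]
    have hIci : (Set.Ici (0 : ℝ)) = {0} ∪ Set.Ioi 0 := by
      ext x
      simp only [Set.mem_Ici, Set.mem_union, Set.mem_singleton_iff, Set.mem_Ioi]
      constructor
      · intro hx
        rcases eq_or_lt_of_le hx with h | h
        · exact Or.inl h.symm
        · exact Or.inr h
      · rintro (h | h) <;> [exact h.ge; exact h.le]
    rw [hIci, measure_union (by simp [Set.disjoint_singleton_left]) measurableSet_Ioi, h0,
      zero_add]
  have hsum : gaussianReal 0 v (Set.Iic 0) + gaussianReal 0 v (Set.Ioi 0) = 1 := by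
    rw [← measure_union (Set.Iic_disjoint_Ioi le_rfl) measurableSet_Ioi, Set.Iic_union_Ioi,
      measure_univ]
  rw [h3, ← two_mul] at hsum
  rw [h1]
  exact (ENNReal.eq_div_iff (by norm_num) (by norm_num)).mpr hsum

lemma my_integral_Iic_gaussianPDFReal_self (m : ℝ) (v : ℝ≥0) (hv : v ≠ 0) :
    ∫ x in Set.Iic m, gaussianPDFReal m v x = 1 / 2 := by
  have h := gaussianReal_apply_eq_integral m hv (Set.Iic m)
  rw [my_gaussianReal_Iic_self m v hv] at h
  have hnn : 0 ≤ ∫ x in Set.Iic m, gaussianPDFReal m v x :=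
    setIntegral_nonneg measurableSet_Iic fun x _ => gaussianPDFReal_nonneg _ _ _
  have h' := congrArg ENNReal.toReal h
  rw [ENNReal.toReal_ofReal hnn] at h'
  rw [← h']
  norm_num [ENNReal.toReal_div]

lemma my_integral_Iic_gaussianPDFReal_le (m c : ℝ) (v : ℝ≥0) (hv : v ≠ 0) (hc : c ≤ m) :
    ∫ x in Set.Iic c, gaussianPDFReal m v x
      ≤ Real.exp (-(m - c) ^ 2 / (2 * v)) * (1 / 2) := by
  have hv0 : (0 : ℝ) < v := by
    exact_mod_cast pos_iff_ne_zero.mpr hv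
  have hpt : ∀ x ∈ Set.Iic c,
      gaussianPDFReal m v x ≤ Real.exp (-(m - c) ^ 2 / (2 * v)) * gaussianPDFReal c v x := by
    intro x hx
    simp only [Set.mem_Iic] at hx
    unfold gaussianPDFReal
    have he : Real.exp (-(x - m) ^ 2 / (2 * (v : ℝ)))
        ≤ Real.exp (-(m - c) ^ 2 / (2 * (v : ℝ))) * Real.exp (-(x - c) ^ 2 / (2 * (v : ℝ))) := by
      rw [← Real.exp_add]
      apply Real.exp_le_exp.mpr
      rw [← add_div, div_le_div_iff₀ (by positivity) (by positivity)]
      nlinarith [mul_nonneg (sub_nonneg.mpr hx) (sub_nonneg.mpr hc)]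
    calc (Real.sqrt (2 * Real.pi * (v : ℝ)))⁻¹ * Real.exp (-(x - m) ^ 2 / (2 * (v : ℝ)))
        ≤ (Real.sqrt (2 * Real.pi * (v : ℝ)))⁻¹ * (Real.exp (-(m - c) ^ 2 / (2 * (v : ℝ)))
            * Real.exp (-(x - c) ^ 2 / (2 * (v : ℝ)))) :=
          mul_le_mul_of_nonneg_left he (by positivity)
      _ = Real.exp (-(m - c) ^ 2 / (2 * (v : ℝ)))
            * ((Real.sqrt (2 * Real.pi * (v : ℝ)))⁻¹
              * Real.exp (-(x - c) ^ 2 / (2 * (v : ℝ)))) := by ring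
  calc ∫ x in Set.Iic c, gaussianPDFReal m v x
      ≤ ∫ x in Set.Iic c, Real.exp (-(m - c) ^ 2 / (2 * v)) * gaussianPDFReal c v x := by
        refine setIntegral_mono_on ((integrable_gaussianPDFReal m v).integrableOn)
          (((integrable_gaussianPDFReal c v).const_mul _).integrableOn) measurableSet_Iic hpt
    _ = Real.exp (-(m - c) ^ 2 / (2 * v)) * ∫ x in Set.Iic c, gaussianPDFReal c v x :=
        integral_const_mul _ _
    _ = Real.exp (-(m - c) ^ 2 / (2 * v)) * (1 / 2) := by
        rw [my_integral_Iic_gaussianPDFReal_self c v hv]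

set_option maxHeartbeats 1000000 in
lemma my_setIntegral_exp_gaussianReal (m : ℝ) (v : ℝ≥0) (hv : v ≠ 0) (s : Set ℝ)
    (hs : MeasurableSet s) :
    ∫ x in s, Real.exp x ∂(gaussianReal m v)
      = Real.exp (m + v / 2) * ∫ x in s, gaussianPDFReal (m + v) v x := by
  have hv0 : (0 : ℝ) < v := by exact_mod_cast pos_iff_ne_zero.mpr hv
  have hmeas : Measurable fun x => Real.toNNReal (gaussianPDFReal m v x) :=
    measurable_real_toNNReal.comp (measurable_gaussianPDFReal m v)
  have hrw : (gaussianReal m v).restrict s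
      = (volume.restrict s).withDensity fun x =>
          ((Real.toNNReal (gaussianPDFReal m v x) : ℝ≥0) : ℝ≥0∞) := by
    rw [gaussianReal_of_var_ne_zero m hv, restrict_withDensity hs]
    rfl
  rw [hrw, integral_withDensity_eq_integral_smul hmeas]
  have hpt : ∀ x : ℝ, Real.toNNReal (gaussianPDFReal m v x) • Real.exp x
      = Real.exp (m + v / 2) * gaussianPDFReal (m + v) v x := by
    intro x
    rw [NNReal.smul_def, Real.coe_toNNReal _ (gaussianPDFReal_nonneg _ _ _), smul_eq_mul]
    have hexp : Real.exp (-(x - m) ^ 2 / (2 * v)) * Real.exp x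
        = Real.exp (m + v / 2) * Real.exp (-(x - (m + v)) ^ 2 / (2 * v)) := by
      rw [← Real.exp_add, ← Real.exp_add]
      congr 1
      field_simp
      ring
    unfold gaussianPDFReal
    rw [mul_assoc, hexp]
    ring
  simp_rw [hpt]
  rw [integral_const_mul]

set_option maxHeartbeats 1000000 in
/-- Lower-tail bounds for the lognormal: if `X ~ N((r - σ²/2)t, σ²t)`, `0 < L < S₀`,
`ε ∈ (0, 1/2)` satisfies `log(1/(2ε)) > (4/5)(1 - 2r/σ²) log(S₀/L)` and
`t < 8(log(S₀/L))²/(25σ² log(1/(2ε)))`, then `P(X ≤ log(L/S₀)) < ε` and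
`E[e^X · 1{e^X ≤ L/S₀}] < ε e^{rt}`. -/
theorem lognormal_lower_tail (r σ t S₀ L ε : ℝ)
    (hσ : 0 < σ) (hr : 0 ≤ r) (ht : 0 < t) (hL : 0 < L) (hLS : L < S₀)
    (hε : ε ∈ Set.Ioo (0 : ℝ) (1 / 2))
    (hεcond : Real.log (1 / (2 * ε)) > (4 / 5) * (1 - 2 * r / σ ^ 2) * Real.log (S₀ / L))
    (htcond : t < 8 * (Real.log (S₀ / L)) ^ 2 / (25 * σ ^ 2 * Real.log (1 / (2 * ε)))) :
    ((gaussianReal ((r - σ ^ 2 / 2) * t) (Real.toNNReal (σ ^ 2 * t)))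
        (Set.Iic (Real.log (L / S₀)))).toReal < ε ∧
      ∫ x in {x : ℝ | Real.exp x ≤ L / S₀}, Real.exp x
          ∂(gaussianReal ((r - σ ^ 2 / 2) * t) (Real.toNNReal (σ ^ 2 * t)))
        < ε * Real.exp (r * t) := by
  obtain ⟨hε0, hε2⟩ := hε
  set lam := Real.log (S₀ / L) with hlamdef
  have hlam0 : 0 < lam := Real.log_pos ((one_lt_div hL).mpr hLS)
  have hc : Real.log (L / S₀) = -lam := by
    rw [show L / S₀ = (S₀ / L)⁻¹ from (inv_div S₀ L).symm, Real.log_inv]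
  have hV : (0 : ℝ) < σ ^ 2 * t := by positivity
  set v : ℝ≥0 := Real.toNNReal (σ ^ 2 * t) with hvdef
  have hvco : (v : ℝ) = σ ^ 2 * t := Real.coe_toNNReal _ hV.le
  have hv : v ≠ 0 := fun h => (not_le.mpr hV) (Real.toNNReal_eq_zero.mp h)
  set K := Real.log (1 / (2 * ε)) with hKdef
  have hK : 0 < K := Real.log_pos (by rw [lt_div_iff₀ (by linarith)]; linarith)
  have htcond' : t * (25 * σ ^ 2 * K) < 8 * lam ^ 2 := by
    rw [lt_div_iff₀ (by positivity)] at htcond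
    linarith
  have hvK : 2 * (σ ^ 2 * t) * K < (4 * lam / 5) ^ 2 := by nlinarith
  have hgap : (σ ^ 2 / 2 - r) * t ≤ lam / 5 := by
    rcases le_or_gt (σ ^ 2 / 2) r with h | h
    · nlinarith
    · have hβ : 0 < 1 - 2 * r / σ ^ 2 := by
        rw [sub_pos, div_lt_one (by positivity)]
        linarith
      have he1 : σ ^ 2 / 2 - r = σ ^ 2 / 2 * (1 - 2 * r / σ ^ 2) := by
        field_simp
      have s1 : 25 * σ ^ 2 * K * t * (1 - 2 * r / σ ^ 2)
          < 8 * lam ^ 2 * (1 - 2 * r / σ ^ 2) := by nlinarith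
      have s2 : 8 * lam ^ 2 * (1 - 2 * r / σ ^ 2) < 10 * K * lam := by nlinarith
      have s4 : 25 * σ ^ 2 * t * (1 - 2 * r / σ ^ 2) < 10 * lam := by
        refine lt_of_mul_lt_mul_left ?_ hK.le
        nlinarith
      rw [he1]
      nlinarith
  have keybound : ∀ m : ℝ, 4 * lam / 5 ≤ m - (-lam) →
      ∫ x in Set.Iic (-lam), gaussianPDFReal m v x < ε := by
    intro m hm
    have hcm : -lam ≤ m := by linarith
    have h1 := my_integral_Iic_gaussianPDFReal_le m (-lam) v hv hcm
    have hsq : (4 * lam / 5) ^ 2 ≤ (m - -lam) ^ 2 := by nlinarith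
    have h2 : Real.exp (-(m - -lam) ^ 2 / (2 * v)) < 2 * ε := by
      have hlt : -(m - -lam) ^ 2 / (2 * (v : ℝ)) < -K := by
        rw [hvco, neg_div, neg_lt_neg_iff, lt_div_iff₀ (by positivity)]
        nlinarith
      calc Real.exp (-(m - -lam) ^ 2 / (2 * v)) < Real.exp (-K) := Real.exp_lt_exp.mpr hlt
        _ = 2 * ε := by
            rw [show -K = Real.log (2 * ε) by rw [hKdef, one_div, Real.log_inv, neg_neg],
              Real.exp_log (by linarith)]
    linarith
  have hgap1 : 4 * lam / 5 ≤ (r - σ ^ 2 / 2) * t - (-lam) := by nlinarith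
  constructor
  · rw [gaussianReal_apply_eq_integral _ hv,
      ENNReal.toReal_ofReal
        (setIntegral_nonneg measurableSet_Iic fun x _ => gaussianPDFReal_nonneg _ _ _), hc]
    exact keybound _ hgap1
  · have hset : {x : ℝ | Real.exp x ≤ L / S₀} = Set.Iic (Real.log (L / S₀)) := by
      ext x
      simp only [Set.mem_setOf_eq, Set.mem_Iic]
      exact (Real.le_log_iff_exp_le (div_pos hL (lt_trans hL hLS))).symm
    rw [hset, hc, my_setIntegral_exp_gaussianReal _ v hv _ measurableSet_Iic,
      show (r - σ ^ 2 / 2) * t + (v : ℝ) / 2 = r * t by rw [hvco]; ring, mul_comm ε]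
    exact mul_lt_mul_of_pos_left (keybound _ (by nlinarith)) (Real.exp_pos _)
end
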